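/- In the random-sum setup, assume additionally that E[N³] < ∞. Then for every x ≥ 0, ∫_0^x ∫_y^∞ P(Z ≤ −z) dz dy ≤ E[N³] · ∫_0^x ∫_y^∞ max_{i∈E} Π_i((−∞, −z]) dz dy, where both sides take values in [0, ∞]. -/

import Mathlib

open MeasureTheory Set
open scoped ENNReal

noncomputable def rsPhi (x t : ℝ) : ℝ≥0∞ := ∫⁻ y in Ioc (0:ℝ) x, ENNReal.ofReal (t - y)

lemma rsPhi_measurable (x : ℝ) : Measurable (rsPhi x) := by
  have : Measurable (Function.uncurry fun t y : ℝ => ENNReal.ofReal (t - y)) :=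
    (measurable_fst.sub measurable_snd).ennreal_ofReal
  exact this.lintegral_prod_right'

/-- Layer-cake identity. -/
lemma rsPhi_layercake {Ω' : Type*} [MeasurableSpace Ω'] (μ : Measure Ω') [SFinite μ]
    (f : Ω' → ℝ) (hf : Measurable f) (x : ℝ) :
    (∫⁻ y in Ioc (0:ℝ) x, ∫⁻ z in Ioi y, μ {ω | f ω ≤ -z}) =
      ∫⁻ ω, rsPhi x (-(f ω)) ∂μ := by
  have step1 : ∀ y : ℝ, (∫⁻ z in Ioi y, μ {ω | f ω ≤ -z}) =
      ∫⁻ ω, ENNReal.ofReal (-(f ω) - y) ∂μ := by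
    intro y
    have hA : MeasurableSet {p : ℝ × Ω' | f p.2 ≤ -p.1} := by
      have : Measurable fun p : ℝ × Ω' => f p.2 + p.1 :=
        (hf.comp measurable_snd).add measurable_fst
      have h0 : {p : ℝ × Ω' | f p.2 ≤ -p.1} = {p : ℝ × Ω' | f p.2 + p.1 ≤ 0} := by
        ext p; simp [le_neg_iff_add_nonpos_right]
      rw [h0]
      exact this measurableSet_Iic
    have key : ∀ z : ℝ, μ {ω | f ω ≤ -z} =
        ∫⁻ ω, {p : ℝ × Ω' | f p.2 ≤ -p.1}.indicator 1 (z, ω) ∂μ := by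
      intro z
      have hs : MeasurableSet {ω | f ω ≤ -z} := hf measurableSet_Iic
      rw [← lintegral_indicator_one hs]
      exact lintegral_congr fun ω => by
        by_cases h : f ω ≤ -z <;> simp [Set.indicator_apply, h]
    simp_rw [key]
    rw [lintegral_lintegral_swap]
    · refine lintegral_congr fun ω => ?_
      have h1 : (∫⁻ z in Ioi y, ({p : ℝ × Ω' | f p.2 ≤ -p.1}).indicator 1 (z, ω)) =
          (volume.restrict (Ioi y)) (Iic (-(f ω))) := by
        rw [← lintegral_indicator_one measurableSet_Iic]
        refine lintegral_congr fun z => ?_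
        by_cases h : f ω ≤ -z
        · simp [Set.indicator_apply, h, le_neg_of_le_neg h]
        · have h' : ¬ z ≤ -(f ω) := fun hz => h (le_neg_of_le_neg hz)
          simp [Set.indicator_apply, h, h']
      rw [h1, Measure.restrict_apply measurableSet_Iic]
      have h2 : Iic (-f ω) ∩ Ioi y = Ioc y (-f ω) := by
        ext z; simp [and_comm]
      rw [h2, Real.volume_Ioc]
    · exact (measurable_one.indicator hA).aemeasurable
  simp_rw [step1]
  rw [lintegral_lintegral_swap]
  · rfl
  · exact (((hf.comp measurable_snd).neg.sub measurable_fst).ennreal_ofReal).aemeasurable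

lemma rsPhi_scale {x : ℝ} (hx : 0 ≤ x) {m : ℕ} (hm : 1 ≤ m) (a : ℝ) :
    (∫⁻ y in Ioc (0:ℝ) x, ENNReal.ofReal (a - y / m)) ≤ (m : ℝ≥0∞) * rsPhi x a := by
  have hc : (0:ℝ) < (m:ℝ) := by exact_mod_cast hm
  have hg : Measurable fun y : ℝ =>
      (Ioc (0:ℝ) x).indicator (fun y => ENNReal.ofReal (a - y / m)) y :=
    ((measurable_const.sub (measurable_id.div_const _)).ennreal_ofReal).indicator
      measurableSet_Ioc
  calc (∫⁻ y in Ioc (0:ℝ) x, ENNReal.ofReal (a - y / m))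
      = ∫⁻ y, (Ioc (0:ℝ) x).indicator (fun y => ENNReal.ofReal (a - y / m)) y := by
        rw [lintegral_indicator measurableSet_Ioc]
    _ = ENNReal.ofReal |(m:ℝ)| * ∫⁻ y, (Ioc (0:ℝ) x).indicator
          (fun y => ENNReal.ofReal (a - y / m)) y ∂(Measure.map ((m:ℝ) * ·) volume) := by
        rw [← smul_eq_mul, ← lintegral_smul_measure, Real.smul_map_volume_mul_left hc.ne']
    _ = (m : ℝ≥0∞) * ∫⁻ u, (Ioc (0:ℝ) x).indicator
          (fun y => ENNReal.ofReal (a - y / m)) ((m:ℝ) * u) := by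
        rw [lintegral_map hg (measurable_const_mul _), abs_of_pos hc,
          ENNReal.ofReal_natCast]
    _ = (m : ℝ≥0∞) * ∫⁻ u in Ioc (0:ℝ) (x / m), ENNReal.ofReal (a - u) := by
        congr 1
        rw [← lintegral_indicator measurableSet_Ioc]
        refine lintegral_congr fun u => ?_
        by_cases h : u ∈ Ioc (0:ℝ) (x / m)
        · have h' : (m:ℝ) * u ∈ Ioc (0:ℝ) x := by
            constructor
            · exact mul_pos hc h.1
            · rw [← le_div_iff₀' hc]; exact h.2
          rw [Set.indicator_of_mem h', Set.indicator_of_mem h,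
            mul_comm, mul_div_assoc, div_self hc.ne', mul_one]
        · have h' : (m:ℝ) * u ∉ Ioc (0:ℝ) x := by
            intro hmem
            refine h ⟨?_, (le_div_iff₀' hc).mpr hmem.2⟩
            nlinarith [hmem.1]
          rw [Set.indicator_of_notMem h', Set.indicator_of_notMem h]
    _ ≤ (m : ℝ≥0∞) * rsPhi x a := by
        refine mul_le_mul_right (lintegral_mono_set (fun u hu => ?_)) _
        exact ⟨hu.1, hu.2.trans (div_le_self hx (by exact_mod_cast hm))⟩

lemma ofReal_sum_le {ι : Type*} (s : Finset ι) (f : ι → ℝ) :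
    ENNReal.ofReal (∑ n ∈ s, f n) ≤ ∑ n ∈ s, ENNReal.ofReal (f n) := by
  classical
  induction s using Finset.induction_on with
  | empty => simp
  | insert _ _ h ih =>
      rw [Finset.sum_insert h, Finset.sum_insert h]
      exact (ENNReal.ofReal_add_le).trans (add_le_add_right ih _)

lemma sum_ofReal_le {m : ℕ} (a : ℕ → ℝ) {y : ℝ} (hy : 0 ≤ y) :
    ENNReal.ofReal ((∑ n ∈ Finset.Icc 1 m, a n) - y) ≤
      ∑ n ∈ Finset.Icc 1 m, ENNReal.ofReal (a n - y / m) := by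
  rcases Nat.eq_zero_or_pos m with hm | hm
  · simp [hm, ENNReal.ofReal_eq_zero, neg_nonpos, hy]
  · have hcard : (Finset.Icc 1 m).card = m := by
      rw [Nat.card_Icc]; omega
    have : (∑ n ∈ Finset.Icc 1 m, a n) - y = ∑ n ∈ Finset.Icc 1 m, (a n - y / m) := by
      rw [Finset.sum_sub_distrib, Finset.sum_const, hcard, nsmul_eq_mul]
      have : (m:ℝ) ≠ 0 := by positivity
      field_simp
    rw [this]
    exact ofReal_sum_le _ _


/-- The random-sum setup: a family `X i n` of independent real random variables with
`X i n ∼ law i`, an `E`-valued sequence `Y` and an `ℕ`-valued variable `N` such that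
the pair `((Y n)ₙ, N)` is independent of the whole family `(X i n)`. -/
structure RandomSumSetup (E : Type*) [MeasurableSpace E] (Ω : Type*) [MeasurableSpace Ω]
    (P : Measure Ω) (law : E → Measure ℝ) where
  X : E → ℕ → Ω → ℝ
  Y : ℕ → Ω → E
  N : Ω → ℕ
  measX : ∀ i n, Measurable (X i n)
  measY : ∀ n, Measurable (Y n)
  measN : Measurable N
  distX : ∀ i n, P.map (X i n) = law i
  indepX : ProbabilityTheory.iIndepFun (m := fun _ : E × ℕ => (inferInstance : MeasurableSpace ℝ))
    (fun p ω => X p.1 p.2 ω) P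
  indepYN : ProbabilityTheory.IndepFun (fun ω => ((fun n => Y n ω), N ω))
    (fun ω (p : E × ℕ) => X p.1 p.2 ω) P

/-- The random sum `Z = Σ_{n=1}^{N} X^{Y_n, n}` (empty sum `= 0`). -/
noncomputable def RandomSumSetup.Z {E : Type*} [MeasurableSpace E] {Ω : Type*}
    [MeasurableSpace Ω] {P : Measure Ω} {law : E → Measure ℝ}
    (S : RandomSumSetup E Ω P law) : Ω → ℝ :=
  fun ω => ∑ n ∈ Finset.Icc 1 (S.N ω), S.X (S.Y n ω) n ω


/-- In the random-sum setup, if `E[N³] < ∞`, then for every `x ≥ 0`,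
`∫_0^x ∫_y^∞ P(Z ≤ −z) dz dy ≤ E[N³] · ∫_0^x ∫_y^∞ max_i Π_i((−∞,−z]) dz dy`
(with both sides valued in `[0,∞]`). -/
theorem randomSum_double_integral_bound {E : Type*} [Fintype E] [Nonempty E]
    [MeasurableSpace E] [MeasurableSingletonClass E] {Ω : Type*} [MeasurableSpace Ω]
    (P : Measure Ω) [IsProbabilityMeasure P] (law : E → Measure ℝ)
    (hlaw : ∀ i, IsProbabilityMeasure (law i)) (S : RandomSumSetup E Ω P law)
    (hN3 : (∫⁻ ω, (S.N ω : ENNReal) ^ 3 ∂P) < ⊤) (x : ℝ) (hx : 0 ≤ x) :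
    (∫⁻ y in Ioc (0 : ℝ) x, ∫⁻ z in Ioi y, P {ω | S.Z ω ≤ -z}) ≤
      (∫⁻ ω, (S.N ω : ENNReal) ^ 3 ∂P) *
        ∫⁻ y in Ioc (0 : ℝ) x, ∫⁻ z in Ioi y, ⨆ i, law i (Iic (-z)) := by
  classical
  set M : ℝ≥0∞ := ∫⁻ y in Ioc (0 : ℝ) x, ∫⁻ z in Ioi y, ⨆ i, law i (Iic (-z)) with hMdef
  -- measurability of the summands and of Z
  have hXYn : ∀ n : ℕ, Measurable fun ω => S.X (S.Y n ω) n ω := by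
    intro n
    have hrw : (fun ω => S.X (S.Y n ω) n ω)
        = fun ω => ∑ i : E, if S.Y n ω = i then S.X i n ω else 0 := by
      ext ω
      rw [Finset.sum_ite_eq]
      simp
    rw [hrw]
    exact Finset.measurable_sum _ fun i _ =>
      Measurable.ite (S.measY n (measurableSet_singleton i)) (S.measX i n) measurable_const
  have hZ : Measurable S.Z := by
    have hF : Measurable fun p : Ω × ℕ => ∑ n ∈ Finset.Icc 1 p.2, S.X (S.Y n p.1) n p.1 := by
      apply measurable_from_prod_countable_left
      intro m
      show Measurable fun a : Ω => ∑ n ∈ Finset.Icc 1 m, S.X (S.Y n a) n a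
      exact Finset.measurable_sum _ fun n _ => hXYn n
    exact hF.comp (measurable_id.prodMk S.measN)
  -- the per-law bound
  have hlaw_bound : ∀ i, (∫⁻ t, rsPhi x (-t) ∂(law i)) ≤ M := by
    intro i
    have hlc := rsPhi_layercake (law i) (fun t => t) measurable_id x
    rw [← hlc]
    exact lintegral_mono fun y => lintegral_mono fun z =>
      le_iSup (fun i => law i (Iic (-z))) i
  have hXc : ∀ (i : E) (n : ℕ), (∫⁻ ω, rsPhi x (-(S.X i n ω)) ∂P) ≤ M := by
    intro i n
    have : ∫⁻ ω, rsPhi x (-(S.X i n ω)) ∂P = ∫⁻ t, rsPhi x (-t) ∂(law i) := by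
      rw [← S.distX i n]
      exact (lintegral_map ((rsPhi_measurable x).comp measurable_neg) (S.measX i n)).symm
    rw [this]; exact hlaw_bound i
  -- rewrite LHS with the layer-cake identity
  rw [rsPhi_layercake P S.Z hZ x]
  -- pointwise bound
  have point : ∀ ω, rsPhi x (-(S.Z ω)) ≤
      ∑ n ∈ Finset.Icc 1 (S.N ω), (S.N ω : ℝ≥0∞) * rsPhi x (-(S.X (S.Y n ω) n ω)) := by
    intro ω
    have hZneg : -(S.Z ω) = ∑ n ∈ Finset.Icc 1 (S.N ω), (-(S.X (S.Y n ω) n ω)) := by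
      rw [RandomSumSetup.Z]
      rw [← Finset.sum_neg_distrib]
    calc rsPhi x (-(S.Z ω))
        ≤ ∑ n ∈ Finset.Icc 1 (S.N ω), ∫⁻ y in Ioc (0:ℝ) x,
            ENNReal.ofReal ((-(S.X (S.Y n ω) n ω)) - y / (S.N ω)) := by
          rw [rsPhi, hZneg]
          calc (∫⁻ y in Ioc (0:ℝ) x,
              ENNReal.ofReal ((∑ n ∈ Finset.Icc 1 (S.N ω), (-(S.X (S.Y n ω) n ω))) - y))
              ≤ ∫⁻ y in Ioc (0:ℝ) x, ∑ n ∈ Finset.Icc 1 (S.N ω),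
                  ENNReal.ofReal ((-(S.X (S.Y n ω) n ω)) - y / (S.N ω)) := by
                refine lintegral_mono_ae ?_
                filter_upwards [ae_restrict_mem measurableSet_Ioc] with y hy
                exact sum_ofReal_le _ hy.1.le
            _ = _ := lintegral_finset_sum _ fun n _ =>
                (measurable_const.sub (measurable_id.div_const _)).ennreal_ofReal
      _ ≤ _ := Finset.sum_le_sum fun n hn =>
          rsPhi_scale hx ((Finset.mem_Icc.mp hn).1.trans (Finset.mem_Icc.mp hn).2) _
  refine (lintegral_mono point).trans ?_
  -- measurability of sets and of the elementary terms
  have hsetmeas : ∀ (m n : ℕ) (i : E), MeasurableSet {ω | S.N ω = m ∧ S.Y n ω = i} :=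
    fun m n i =>
      (S.measN (measurableSet_singleton m)).inter (S.measY n (measurableSet_singleton i))
  have hterm_meas : ∀ (m n : ℕ) (i : E), Measurable fun ω =>
      (if S.N ω = m ∧ S.Y n ω = i then (m : ℝ≥0∞) * rsPhi x (-(S.X i n ω)) else 0) := by
    intro m n i
    exact Measurable.ite (hsetmeas m n i)
      (measurable_const.mul (((rsPhi_measurable x).comp measurable_neg).comp (S.measX i n)))
      measurable_const
  -- the elementary independence bound
  have hterm : ∀ (m n : ℕ) (i : E),
      (∫⁻ ω, (if S.N ω = m ∧ S.Y n ω = i then (m : ℝ≥0∞) * rsPhi x (-(S.X i n ω)) else 0) ∂P)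
        ≤ (m : ℝ≥0∞) * P {ω | S.N ω = m ∧ S.Y n ω = i} * M := by
    intro m n i
    have hev : Measurable fun w : (ℕ → E) × ℕ => w.1 n :=
      (measurable_pi_apply n).comp measurable_fst
    have hAm : MeasurableSet {w : (ℕ → E) × ℕ | w.2 = m ∧ w.1 n = i} :=
      (measurable_snd (measurableSet_singleton m)).inter (hev (measurableSet_singleton i))
    have h1 : Measurable fun w : (ℕ → E) × ℕ =>
        ({w : (ℕ → E) × ℕ | w.2 = m ∧ w.1 n = i}.indicator (fun _ => (m : ℝ≥0∞)) w) :=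
      measurable_const.indicator hAm
    have h2 : Measurable fun v : E × ℕ → ℝ => rsPhi x (-(v (i, n))) :=
      (rsPhi_measurable x).comp (measurable_pi_apply (i, n)).neg
    have hW : Measurable fun ω => ((fun n => S.Y n ω), S.N ω) :=
      (measurable_pi_lambda _ fun n => S.measY n).prodMk S.measN
    have hV : Measurable fun ω (p : E × ℕ) => S.X p.1 p.2 ω :=
      measurable_pi_lambda _ fun p => S.measX p.1 p.2
    have hindep := S.indepYN.comp h1 h2
    calc (∫⁻ ω, (if S.N ω = m ∧ S.Y n ω = i then (m : ℝ≥0∞) * rsPhi x (-(S.X i n ω)) else 0) ∂P)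
        = ∫⁻ ω, ((fun w : (ℕ → E) × ℕ =>
              ({w : (ℕ → E) × ℕ | w.2 = m ∧ w.1 n = i}.indicator (fun _ => (m : ℝ≥0∞)) w)) ∘
              (fun ω => ((fun n => S.Y n ω), S.N ω))) ω *
            ((fun v : E × ℕ → ℝ => rsPhi x (-(v (i, n)))) ∘
              (fun ω (p : E × ℕ) => S.X p.1 p.2 ω)) ω ∂P := by
          refine lintegral_congr fun ω => ?_
          by_cases h : S.N ω = m ∧ S.Y n ω = i <;>
            simp [Function.comp, Set.indicator_apply, h]
      _ = (∫⁻ ω, ((fun w : (ℕ → E) × ℕ =>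
              ({w : (ℕ → E) × ℕ | w.2 = m ∧ w.1 n = i}.indicator (fun _ => (m : ℝ≥0∞)) w)) ∘
              (fun ω => ((fun n => S.Y n ω), S.N ω))) ω ∂P) *
            ∫⁻ ω, ((fun v : E × ℕ → ℝ => rsPhi x (-(v (i, n)))) ∘
              (fun ω (p : E × ℕ) => S.X p.1 p.2 ω)) ω ∂P :=
          ProbabilityTheory.lintegral_mul_eq_lintegral_mul_lintegral_of_indepFun''
            ((h1.comp hW)).aemeasurable ((h2.comp hV)).aemeasurable hindep
      _ = ((m : ℝ≥0∞) * P {ω | S.N ω = m ∧ S.Y n ω = i}) *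
            ∫⁻ ω, rsPhi x (-(S.X i n ω)) ∂P := by
          congr 1
          have heq : (fun ω => ((fun w : (ℕ → E) × ℕ =>
              ({w : (ℕ → E) × ℕ | w.2 = m ∧ w.1 n = i}.indicator (fun _ => (m : ℝ≥0∞)) w)) ∘
              (fun ω => ((fun n => S.Y n ω), S.N ω))) ω)
              = fun ω => ({ω | S.N ω = m ∧ S.Y n ω = i}.indicator (fun _ => (m : ℝ≥0∞)) ω) := by
            ext ω
            by_cases h : S.N ω = m ∧ S.Y n ω = i <;>
              simp [Function.comp, Set.indicator_apply, h]
          rw [heq, lintegral_indicator_const (hsetmeas m n i)]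
      _ ≤ ((m : ℝ≥0∞) * P {ω | S.N ω = m ∧ S.Y n ω = i}) * M :=
          mul_le_mul_right (hXc i n) _
  have hpart : ∀ (m n : ℕ), (∑ i : E, P {ω | S.N ω = m ∧ S.Y n ω = i}) = P {ω | S.N ω = m} := by
    intro m n
    have hU : {ω | S.N ω = m} = ⋃ i : E, {ω | S.N ω = m ∧ S.Y n ω = i} := by
      ext ω; simp
    have hdisj : Pairwise (Function.onFun Disjoint
        fun i : E => {ω | S.N ω = m ∧ S.Y n ω = i}) := by
      intro i j hij
      refine Set.disjoint_left.mpr fun ω h1 h2 => hij ?_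
      exact h1.2.symm.trans h2.2
    rw [hU, measure_iUnion hdisj fun i => hsetmeas m n i, tsum_fintype]
  have hGeq : (fun ω => ∑ n ∈ Finset.Icc 1 (S.N ω),
        (S.N ω : ℝ≥0∞) * rsPhi x (-(S.X (S.Y n ω) n ω)))
      = fun ω => ∑' m : ℕ, ∑ n ∈ Finset.Icc 1 m, ∑ i : E,
          (if S.N ω = m ∧ S.Y n ω = i then (m : ℝ≥0∞) * rsPhi x (-(S.X i n ω)) else 0) := by
    ext ω
    have h0 : ∀ m : ℕ, m ≠ S.N ω → (∑ n ∈ Finset.Icc 1 m, ∑ i : E,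
        (if S.N ω = m ∧ S.Y n ω = i then (m : ℝ≥0∞) * rsPhi x (-(S.X i n ω)) else 0)) = 0 := by
      intro m hm
      refine Finset.sum_eq_zero fun n _ => Finset.sum_eq_zero fun i _ => ?_
      rw [if_neg]
      exact fun h => hm h.1.symm
    rw [tsum_eq_single (S.N ω) h0]
    refine Finset.sum_congr rfl fun n _ => ?_
    simp
  rw [hGeq, lintegral_tsum fun m => (Finset.measurable_sum _ fun n _ =>
    Finset.measurable_sum _ fun i _ => hterm_meas m n i).aemeasurable]
  have hN3eq : (∫⁻ ω, (S.N ω : ℝ≥0∞) ^ 3 ∂P)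
      = ∑' m : ℕ, (m : ℝ≥0∞) ^ 3 * P {ω | S.N ω = m} := by
    have h1 : (∫⁻ ω, (S.N ω : ℝ≥0∞) ^ 3 ∂P)
        = ∫⁻ m, ((m : ℝ≥0∞) ^ 3) ∂(P.map S.N) :=
      (lintegral_map (measurable_from_top : Measurable fun m : ℕ => ((m : ℝ≥0∞)) ^ 3) S.measN).symm
    rw [h1, lintegral_countable']
    refine tsum_congr fun m => ?_
    rw [Measure.map_apply S.measN (measurableSet_singleton m)]
    rfl
  rw [hN3eq, ← ENNReal.tsum_mul_right]
  refine ENNReal.tsum_le_tsum fun m => ?_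
  have hswap : (∫⁻ ω, ∑ n ∈ Finset.Icc 1 m, ∑ i : E,
      (if S.N ω = m ∧ S.Y n ω = i then (m : ℝ≥0∞) * rsPhi x (-(S.X i n ω)) else 0) ∂P)
      = ∑ n ∈ Finset.Icc 1 m, ∑ i : E, ∫⁻ ω,
          (if S.N ω = m ∧ S.Y n ω = i then (m : ℝ≥0∞) * rsPhi x (-(S.X i n ω)) else 0) ∂P := by
    rw [lintegral_finset_sum _ fun n _ => Finset.measurable_sum _ fun i _ => hterm_meas m n i]
    exact Finset.sum_congr rfl fun n _ => lintegral_finset_sum _ fun i _ => hterm_meas m n i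
  rw [hswap]
  calc (∑ n ∈ Finset.Icc 1 m, ∑ i : E, ∫⁻ ω,
        (if S.N ω = m ∧ S.Y n ω = i then (m : ℝ≥0∞) * rsPhi x (-(S.X i n ω)) else 0) ∂P)
      ≤ ∑ n ∈ Finset.Icc 1 m, ∑ i : E,
          (m : ℝ≥0∞) * P {ω | S.N ω = m ∧ S.Y n ω = i} * M :=
        Finset.sum_le_sum fun n _ => Finset.sum_le_sum fun i _ => hterm m n i
    _ = ∑ n ∈ Finset.Icc 1 m, (m : ℝ≥0∞) * P {ω | S.N ω = m} * M := by
        refine Finset.sum_congr rfl fun n _ => ?_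
        rw [← hpart m n, Finset.mul_sum, Finset.sum_mul]
    _ = (m : ℝ≥0∞) * (m : ℝ≥0∞) * P {ω | S.N ω = m} * M := by
        rw [Finset.sum_const, Nat.card_Icc]
        have hm1 : m + 1 - 1 = m := by omega
        rw [hm1, nsmul_eq_mul]
        ring
    _ ≤ (m : ℝ≥0∞) ^ 3 * P {ω | S.N ω = m} * M := by
        refine mul_le_mul_left (mul_le_mul_left ?_ _) _
        rcases Nat.eq_zero_or_pos m with h | h
        · simp [h]
        · have h1 : (1 : ℝ≥0∞) ≤ (m : ℝ≥0∞) := by exact_mod_cast h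
          calc (m : ℝ≥0∞) * m = (m : ℝ≥0∞) * m * 1 := by ring
            _ ≤ (m : ℝ≥0∞) * m * m := mul_le_mul_right h1 _
            _ = (m : ℝ≥0∞) ^ 3 := by ring
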